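/- For every integer k ≥ 2, the diamond-necklace N_k with k diamonds admits a good decomposition of its edge set into the edge set of a spanning tree, a matching (possibly empty), and the edge set of a 2-regular subgraph. -/

import Mathlib

open SimpleGraph

variable {V : Type*}

/-- A graph is claw-free if it has no induced subgraph isomorphic to `K_{1,3}`:
there are no four vertices `v, a, b, c` with `v` adjacent to the pairwise distinct,
pairwise non-adjacent vertices `a, b, c`. -/
def IsClawFree (G : SimpleGraph V) : Prop :=
  ¬ ∃ v a b c : V, G.Adj v a ∧ G.Adj v b ∧ G.Adj v c ∧
    a ≠ b ∧ a ≠ c ∧ b ≠ c ∧ ¬ G.Adj a b ∧ ¬ G.Adj a c ∧ ¬ G.Adj b c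

/-- A graph is cubic if every vertex has degree three. -/
def IsCubic (G : SimpleGraph V) : Prop :=
  ∀ v : V, (G.neighborSet v).ncard = 3

/-- A graph (viewed as an edge set) is a matching if every vertex has at most one neighbour. -/
def IsMatchingGraph (M : SimpleGraph V) : Prop :=
  ∀ ⦃v w w' : V⦄, M.Adj v w → M.Adj v w' → w = w'

/-- A (nonempty) 2-regular subgraph: it has at least one edge, and every vertex incident
with an edge has exactly two neighbours. -/
def IsTwoRegularGraph (O : SimpleGraph V) : Prop :=
  O.edgeSet.Nonempty ∧ ∀ v ∈ O.support, (O.neighborSet v).ncard = 2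

/-- A good decomposition of `G`: the edge set of `G` is partitioned into the edge set of a
spanning tree `T`, a matching `M` (possibly empty), and the edge set of a 2-regular
subgraph `O`. -/
def IsGoodDecomposition (G T M O : SimpleGraph V) : Prop :=
  T ≤ G ∧ M ≤ G ∧ O ≤ G ∧
  T.IsTree ∧ IsMatchingGraph M ∧ IsTwoRegularGraph O ∧
  T.edgeSet ∪ M.edgeSet ∪ O.edgeSet = G.edgeSet ∧
  Disjoint T.edgeSet M.edgeSet ∧ Disjoint T.edgeSet O.edgeSet ∧
  Disjoint M.edgeSet O.edgeSet

/-- The diamond-necklace `N_k`: vertex `(i, 0)` is `a_i`, `(i, 1)` is `b_i`, `(i, 2)` is `c_i`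
and `(i, 3)` is `d_i`.  Inside the `i`-th diamond all pairs are adjacent except `a_i d_i`,
and the diamonds are joined cyclically by the edges `d_i a_{i+1}` (indices mod `k`). -/
def diamondNecklace (k : ℕ) : SimpleGraph (Fin k × Fin 4) :=
  SimpleGraph.fromRel (fun p q =>
    (p.1 = q.1 ∧ ¬ ((p.2 = 0 ∧ q.2 = 3) ∨ (p.2 = 3 ∧ q.2 = 0))) ∨
    ((q.1 : ℕ) = ((p.1 : ℕ) + 1) % k ∧ p.2 = 3 ∧ q.2 = 0))

namespace DNaux

/-- general acyclicity criterion -/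
lemma isAcyclic_of_parent {W : Type*} (G : SimpleGraph W) (f : W → W) (d : W → ℕ)
    (h : ∀ ⦃v w : W⦄, G.Adj v w → (v = f w ∧ d v < d w) ∨ (w = f v ∧ d w < d v)) :
    G.IsAcyclic := by
  intro v0 c hc
  classical
  have htne : c.support.tail ≠ [] := by
    cases c with
    | nil => exact absurd rfl hc.ne_nil
    | cons h p => simp
  obtain ⟨u, hu⟩ : ∃ u, u ∈ c.support.tail.argmax d := by
    cases hh : c.support.tail.argmax d with
    | none => exact absurd (List.argmax_eq_none.mp hh) htne
    | some u => exact ⟨u, rfl⟩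
  have humem : u ∈ c.support := List.mem_of_mem_tail (List.argmax_mem hu)
  set c' := c.rotate u humem with hc'def
  have hc' : c'.IsCycle := hc.rotate humem
  have hmax : ∀ a ∈ c'.support, d a ≤ d u := by
    intro a ha
    rw [c'.support_eq_cons] at ha
    rcases List.mem_cons.mp ha with rfl | ha
    · exact le_refl _
    · exact List.le_of_mem_argmax ((c.support_rotate u humem).perm.mem_iff.mp ha) hu
  cases hcc : c' with
  | nil => exact hc'.ne_nil (hcc ▸ rfl)
  | @cons _ x _ hadj q =>
    obtain ⟨y, q2, hadj', heq⟩ := SimpleGraph.Walk.exists_cons_eq_concat hadj q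
    have hxfu : x = f u := by
      rcases h hadj with ⟨h1, h2⟩ | ⟨h1, h2⟩
      · exfalso
        have : x ∈ c'.support := by
          rw [hcc]; simp [SimpleGraph.Walk.support_cons]
        exact absurd (hmax x this) (by omega)
      · exact h1
    have hyfu : y = f u := by
      rcases h hadj' with ⟨h1, h2⟩ | ⟨h1, h2⟩
      · exact h1
      · exfalso
        have : y ∈ c'.support := by
          rw [hcc, heq, SimpleGraph.Walk.concat_eq_append]
          simp [SimpleGraph.Walk.support_append]
        exact absurd (hmax y this) (by omega)
    have hxy : x = y := hxfu.trans hyfu.symm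
    have hnodup : ((SimpleGraph.Walk.cons hadj q).edges).Nodup := by
      rw [← hcc]; exact hc'.edges_nodup
    have hlen : 3 ≤ (SimpleGraph.Walk.cons hadj q).length := by
      rw [← hcc]; exact hc'.three_le_length
    have hedges : s(u, x) :: q.edges = q2.edges ++ [s(y, u)] := by
      have := congrArg SimpleGraph.Walk.edges heq
      rwa [SimpleGraph.Walk.edges_cons, SimpleGraph.Walk.edges_concat,
        List.concat_eq_append] at this
    rw [SimpleGraph.Walk.edges_cons] at hnodup
    have hmem : s(u, x) ∈ q.edges := by
      cases hq2 : q2.edges with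
      | nil =>
        rw [hq2] at hedges
        simp at hedges
        have : q.length = 0 := by
          exact SimpleGraph.Walk.nil_iff_length_eq.mp hedges.2
        simp [SimpleGraph.Walk.length_cons, this] at hlen
      | cons e t =>
        rw [hq2] at hedges
        have h2 : q.edges = t ++ [s(y, u)] := by
          simpa using congrArg List.tail hedges
        rw [h2, hxy]
        exact List.mem_append_right _ (List.mem_singleton.mpr Sym2.eq_swap)
    exact (List.nodup_cons.mp hnodup).1 hmem

def TT (k : ℕ) : SimpleGraph (Fin k × Fin 4) :=
  SimpleGraph.fromRel (fun p q =>
    (p.1 = q.1 ∧ (((p.1 : ℕ) = 0 ∧ (p.2 : ℕ) = 3 ∧ ((q.2 : ℕ) = 1 ∨ (q.2 : ℕ) = 2)) ∨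
      ((p.1 : ℕ) ≠ 0 ∧ (q.2 : ℕ) = (p.2 : ℕ) + 1))) ∨
    ((q.1 : ℕ) = ((p.1 : ℕ) + 1) % k ∧ (p.2 : ℕ) = 3 ∧ (q.2 : ℕ) = 0))

def MM (k : ℕ) : SimpleGraph (Fin k × Fin 4) :=
  SimpleGraph.fromRel (fun p q =>
    p.1 = q.1 ∧ (p.1 : ℕ) ≠ 0 ∧
      (((p.2 : ℕ) = 0 ∧ (q.2 : ℕ) = 2) ∨ ((p.2 : ℕ) = 1 ∧ (q.2 : ℕ) = 3)))

def OO (k : ℕ) : SimpleGraph (Fin k × Fin 4) :=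
  SimpleGraph.fromRel (fun p q =>
    p.1 = q.1 ∧ (p.1 : ℕ) = 0 ∧ (p.2 : ℕ) < 3 ∧ (q.2 : ℕ) < 3)

lemma mod_iff {k : ℕ} (hk : 2 ≤ k) (i j : Fin k) :
    ((j : ℕ) = ((i : ℕ) + 1) % k) ↔
      (((i : ℕ) + 1 < k ∧ (j : ℕ) = (i : ℕ) + 1) ∨ ((i : ℕ) + 1 = k ∧ (j : ℕ) = 0)) := by
  have hi := i.isLt
  rcases Nat.lt_or_ge ((i : ℕ) + 1) k with h | h
  · rw [Nat.mod_eq_of_lt h]; omega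
  · rw [show (i : ℕ) + 1 = k by omega, Nat.mod_self]; omega

lemma adj_iff {k : ℕ} (hk : 2 ≤ k) (p q : Fin k × Fin 4) :
    (diamondNecklace k).Adj p q ↔ (TT k).Adj p q ∨ (MM k).Adj p q ∨ (OO k).Adj p q := by
  obtain ⟨i, x⟩ := p
  obtain ⟨j, y⟩ := q
  simp only [diamondNecklace, TT, MM, OO, SimpleGraph.fromRel_adj, ne_eq, Prod.mk.injEq,
    Fin.ext_iff, mod_iff hk, show ((3 : Fin 4) : ℕ) = 3 from rfl,
    show ((0 : Fin 4) : ℕ) = 0 from rfl]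
  have hx := x.isLt
  have hy := y.isLt
  have hi := i.isLt
  have hj := j.isLt
  generalize (i : ℕ) = a at *
  generalize (j : ℕ) = b at *
  generalize (x : ℕ) = c at *
  generalize (y : ℕ) = d at *
  interval_cases c <;> interval_cases d <;> simp <;> omega

def rt (k : ℕ) (h : 0 < k) : Fin k × Fin 4 := (⟨0, h⟩, 3)

def par {k : ℕ} (v : Fin k × Fin 4) : Fin k × Fin 4 :=
  if (v.2 : ℕ) = 0 then
    (⟨((v.1 : ℕ) + (k - 1)) % k,
      Nat.mod_lt _ (Nat.lt_of_le_of_lt (Nat.zero_le _) v.1.isLt)⟩, 3)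
  else if (v.1 : ℕ) = 0 then (v.1, 3)
  else (v.1, ⟨(v.2 : ℕ) - 1, by have := v.2.isLt; omega⟩)

def dep {k : ℕ} (v : Fin k × Fin 4) : ℕ :=
  if (v.1 : ℕ) = 0 then (if (v.2 : ℕ) = 3 then 0 else if (v.2 : ℕ) = 0 then 4 * k - 3 else 1)
  else 4 * ((v.1 : ℕ) - 1) + (v.2 : ℕ) + 1

lemma hmod {k : ℕ} (hk : 2 ≤ k) (i : Fin k) :
    ((i : ℕ) + (k - 1)) % k = if (i : ℕ) = 0 then k - 1 else (i : ℕ) - 1 := by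
  have hi := i.isLt
  split_ifs with h
  · rw [h, Nat.zero_add, Nat.mod_eq_of_lt (by omega)]
  · rw [show (i : ℕ) + (k - 1) = ((i : ℕ) - 1) + k by omega, Nat.add_mod_right,
      Nat.mod_eq_of_lt (by omega)]

lemma TT_adj_struct {k : ℕ} (hk : 2 ≤ k) {v w : Fin k × Fin 4} (h : (TT k).Adj v w) :
    (v = par w ∧ dep v < dep w) ∨ (w = par v ∧ dep w < dep v) := by
  obtain ⟨i, x⟩ := v
  obtain ⟨j, y⟩ := w
  have hx := x.isLt
  have hy := y.isLt
  have hi := i.isLt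
  have hj := j.isLt
  simp only [TT, SimpleGraph.fromRel_adj, ne_eq, Prod.mk.injEq, Fin.ext_iff,
    mod_iff hk] at h
  simp only [par, dep, Prod.ext_iff, Fin.ext_iff, hmod hk]
  obtain ⟨hne, hrel⟩ := h
  rcases hrel with (⟨hij, hD⟩ | hL) | (⟨hij, hD⟩ | hL) <;>
    split_ifs <;> simp_all <;> (try (split_ifs <;> simp_all)) <;> omega

lemma ne_rt_iff {k : ℕ} (h0 : 0 < k) (v : Fin k × Fin 4) :
    v ≠ rt k h0 ↔ ¬ ((v.1 : ℕ) = 0 ∧ (v.2 : ℕ) = 3) := by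
  obtain ⟨i, x⟩ := v
  simp [rt, Prod.ext_iff, Fin.ext_iff, show ((3 : Fin 4) : ℕ) = 3 from rfl, and_comm]

lemma adj_par {k : ℕ} (hk : 2 ≤ k) {v : Fin k × Fin 4} (hv : v ≠ rt k (by omega)) :
    (TT k).Adj v (par v) := by
  obtain ⟨i, x⟩ := v
  rw [ne_rt_iff] at hv
  have hx := x.isLt
  have hi := i.isLt
  simp only [TT, SimpleGraph.fromRel_adj, ne_eq, Prod.mk.injEq, Fin.ext_iff,
    mod_iff hk, par, Prod.ext_iff, hmod hk,
    show ((3 : Fin 4) : ℕ) = 3 from rfl, show ((0 : Fin 4) : ℕ) = 0 from rfl]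
  split_ifs <;> simp_all <;> (try (split_ifs <;> simp_all)) <;> omega

lemma dep_par_lt {k : ℕ} (hk : 2 ≤ k) {v : Fin k × Fin 4} (hv : v ≠ rt k (by omega)) :
    dep (par v) < dep v := by
  obtain ⟨i, x⟩ := v
  rw [ne_rt_iff] at hv
  have hx := x.isLt
  have hi := i.isLt
  simp only [par, dep, Prod.ext_iff, Fin.ext_iff, hmod hk,
    show ((3 : Fin 4) : ℕ) = 3 from rfl, show ((0 : Fin 4) : ℕ) = 0 from rfl]
  split_ifs <;> simp_all <;> (try (split_ifs <;> (try simp_all))) <;>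
    (try simp_all [show ((3 : Fin 4) : ℕ) = 3 from rfl]) <;> omega

lemma TT_connected {k : ℕ} (hk : 2 ≤ k) : (TT k).Connected := by
  have h0 : 0 < k := by omega
  have key : ∀ n (v : Fin k × Fin 4), dep v ≤ n → (TT k).Reachable v (rt k h0) := by
    intro n
    induction n with
    | zero =>
      intro v hv
      by_cases h : v = rt k h0
      · exact h ▸ SimpleGraph.Reachable.refl _
      · exact absurd (Nat.lt_of_lt_of_le (dep_par_lt hk h) hv) (Nat.not_lt_zero _)
    | succ n ih =>
      intro v hv
      by_cases h : v = rt k h0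
      · exact h ▸ SimpleGraph.Reachable.refl _
      · exact ((adj_par hk h).reachable).trans
          (ih (par v) (by have := dep_par_lt hk h; omega))
  rw [SimpleGraph.connected_iff]
  refine ⟨fun u v => ?_, ⟨rt k h0⟩⟩
  exact (key (dep u) u le_rfl).trans (key (dep v) v le_rfl).symm

lemma TT_isTree {k : ℕ} (hk : 2 ≤ k) : (TT k).IsTree :=
  ⟨TT_connected hk, isAcyclic_of_parent _ par dep (fun _ _ h => TT_adj_struct hk h)⟩

lemma MM_matching {k : ℕ} : IsMatchingGraph (MM k) := by
  rintro ⟨i, x⟩ ⟨j, y⟩ ⟨j', y'⟩ h h'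
  simp only [MM, SimpleGraph.fromRel_adj, ne_eq, Prod.mk.injEq, Fin.ext_iff] at h h'
  have hx := x.isLt
  have hy := y.isLt
  have hy' := y'.isLt
  exact Prod.ext_iff.mpr ⟨Fin.ext (show (j : ℕ) = (j' : ℕ) by omega),
    Fin.ext (show (y : ℕ) = (y' : ℕ) by omega)⟩

lemma OO_tworeg {k : ℕ} (hk : 2 ≤ k) : IsTwoRegularGraph (OO k) := by
  have h0 : 0 < k := by omega
  constructor
  · refine ⟨s(((⟨0, h0⟩ : Fin k), (0 : Fin 4)), ((⟨0, h0⟩ : Fin k), (1 : Fin 4))), ?_⟩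
    rw [SimpleGraph.mem_edgeSet]
    simp [OO, SimpleGraph.fromRel_adj, Prod.ext_iff, Fin.ext_iff]
  · rintro ⟨i, x⟩ hv
    rw [SimpleGraph.mem_support] at hv
    obtain ⟨⟨j, y⟩, hw⟩ := hv
    simp only [OO, SimpleGraph.fromRel_adj, ne_eq, Prod.mk.injEq, Fin.ext_iff] at hw
    have hx := x.isLt
    have hy := y.isLt
    have hi0 : (i : ℕ) = 0 := by omega
    have hx3 : (x : ℕ) < 3 := by omega
    set n1 : Fin 4 := ⟨if (x : ℕ) = 0 then 1 else 0, by split_ifs <;> omega⟩ with hn1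
    set n2 : Fin 4 := ⟨if (x : ℕ) = 2 then 1 else 2, by split_ifs <;> omega⟩ with hn2
    have hset : (OO k).neighborSet (i, x) = {(i, n1), (i, n2)} := by
      ext ⟨j', z⟩
      simp only [SimpleGraph.mem_neighborSet, OO, SimpleGraph.fromRel_adj, ne_eq,
        Prod.mk.injEq, Fin.ext_iff, Set.mem_insert_iff, Set.mem_singleton_iff, hn1, hn2]
      have hz := z.isLt
      constructor
      · rintro ⟨hne, hrel⟩
        split_ifs <;> omega
      · intro hcase
        split_ifs at hcase <;>
          (constructor; · omega
           · constructor <;> omega)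
    rw [hset, Set.ncard_pair]
    intro hcon
    rw [Prod.ext_iff, Fin.ext_iff, Fin.ext_iff] at hcon
    simp only [hn1, hn2] at hcon
    obtain ⟨-, hcon2⟩ := hcon
    split_ifs at hcon2 <;> omega

lemma disj_TM {k : ℕ} (hk : 2 ≤ k) : Disjoint (TT k).edgeSet (MM k).edgeSet := by
  rw [Set.disjoint_left]
  intro e
  induction e using Sym2.ind with
  | _ p q =>
    rw [SimpleGraph.mem_edgeSet, SimpleGraph.mem_edgeSet]
    obtain ⟨i, x⟩ := p
    obtain ⟨j, y⟩ := q
    intro h1 h2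
    simp only [TT, MM, SimpleGraph.fromRel_adj, ne_eq, Prod.mk.injEq, Fin.ext_iff,
      mod_iff hk] at h1 h2
    have hx := x.isLt
    have hy := y.isLt
    omega

lemma disj_TO {k : ℕ} (hk : 2 ≤ k) : Disjoint (TT k).edgeSet (OO k).edgeSet := by
  rw [Set.disjoint_left]
  intro e
  induction e using Sym2.ind with
  | _ p q =>
    rw [SimpleGraph.mem_edgeSet, SimpleGraph.mem_edgeSet]
    obtain ⟨i, x⟩ := p
    obtain ⟨j, y⟩ := q
    intro h1 h2
    simp only [TT, OO, SimpleGraph.fromRel_adj, ne_eq, Prod.mk.injEq, Fin.ext_iff,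
      mod_iff hk] at h1 h2
    have hx := x.isLt
    have hy := y.isLt
    omega

lemma disj_MO {k : ℕ} : Disjoint (MM k).edgeSet (OO k).edgeSet := by
  rw [Set.disjoint_left]
  intro e
  induction e using Sym2.ind with
  | _ p q =>
    rw [SimpleGraph.mem_edgeSet, SimpleGraph.mem_edgeSet]
    obtain ⟨i, x⟩ := p
    obtain ⟨j, y⟩ := q
    intro h1 h2
    simp only [MM, OO, SimpleGraph.fromRel_adj, ne_eq, Prod.mk.injEq, Fin.ext_iff] at h1 h2
    omega

end DNaux

/-- For every `k ≥ 2`, the diamond-necklace `N_k` has a good decomposition. -/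
theorem diamondNecklace_good (k : ℕ) (hk : 2 ≤ k) :
    ∃ T M O : SimpleGraph (Fin k × Fin 4), IsGoodDecomposition (diamondNecklace k) T M O := by
  refine ⟨DNaux.TT k, DNaux.MM k, DNaux.OO k, ?_, ?_, ?_, ?_, ?_, ?_, ?_, ?_, ?_, ?_⟩
  · exact fun p q h => (DNaux.adj_iff hk p q).mpr (Or.inl h)
  · exact fun p q h => (DNaux.adj_iff hk p q).mpr (Or.inr (Or.inl h))
  · exact fun p q h => (DNaux.adj_iff hk p q).mpr (Or.inr (Or.inr h))
  · exact DNaux.TT_isTree hk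
  · exact DNaux.MM_matching
  · exact DNaux.OO_tworeg hk
  · ext e
    induction e using Sym2.ind with
    | _ p q =>
      simp only [Set.mem_union, SimpleGraph.mem_edgeSet, DNaux.adj_iff hk p q, or_assoc]
  · exact DNaux.disj_TM hk
  · exact DNaux.disj_TO hk
  · exact DNaux.disj_MO
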